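/- Let a be a positive integer and b, d be integers with b ≠ d and b, d both nonzero. Suppose p is a prime such that v_p(a) > max{v_p(b), v_p(d)} and v_p(b) = v_p(d). Then the chromatic number of the graph G_{a,b,a,d} is at most p^{v_p(b − d)} (p − 1). -/

import Mathlib

open MeasureTheory Filter

/-- The set `R_{a,b,c,d}` of positive rational values `(an+b)/(cn+d)` not equal to `1`. -/
def Rset (a c : ℕ) (b d : ℤ) : Set ℚ :=
  {q : ℚ | (∃ n : ℕ, 0 < n ∧ q = ((a : ℚ) * n + (b : ℚ)) / ((c : ℚ) * n + (d : ℚ))) ∧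
    0 < q ∧ q ≠ 1}

/-- The graph `G(R)` on the positive integers where distinct `m`, `n` are adjacent
iff `m/n ∈ R` or `n/m ∈ R`. -/
def graphOf (R : Set ℚ) : SimpleGraph ℕ+ where
  Adj m n := m ≠ n ∧ (((m : ℚ) / (n : ℚ)) ∈ R ∨ ((n : ℚ) / (m : ℚ)) ∈ R)
  symm := ⟨fun _ _ h => ⟨h.1.symm, h.2.symm⟩⟩
  loopless := ⟨fun _ h => h.1 rfl⟩

theorem chromatic_bound_of_equal_valuation
    (a : ℕ) (ha : 0 < a) (b d : ℤ) (hb : b ≠ 0) (hd : d ≠ 0) (hbd : b ≠ d)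
    (p : ℕ) (hp : p.Prime)
    (hval : max (padicValInt p b) (padicValInt p d) < padicValInt p (a : ℤ))
    (heq : padicValInt p b = padicValInt p d) :
    (graphOf (Rset a a b d)).chromaticNumber
      ≤ ((p ^ padicValInt p (b - d) * (p - 1) : ℕ) : ℕ∞) := by
  haveI : Fact p.Prime := ⟨hp⟩
  set w := padicValInt p (b - d) with hw
  haveI : NeZero (p ^ (w + 1)) := ⟨pow_ne_zero _ hp.ne_zero⟩
  -- valuation of a*k + x when v_p(x) < v_p(a)
  have hkey : ∀ x : ℤ, x ≠ 0 → padicValInt p x < padicValInt p (a : ℤ) → ∀ k : ℕ, 0 < k →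
      padicValInt p ((a : ℤ) * k + x) = padicValInt p x ∧ (a : ℤ) * k + x ≠ 0 := by
    intro x hx hxa k hk
    have hdvd1 : (p : ℤ) ^ padicValInt p x ∣ (a : ℤ) * k + x := by
      refine dvd_add (Dvd.dvd.mul_right ?_ _) (padicValInt_dvd _)
      exact (padicValInt_dvd_iff _ _).2 (Or.inr hxa.le)
    have hdvd2 : ¬ (p : ℤ) ^ (padicValInt p x + 1) ∣ (a : ℤ) * k + x := by
      intro hdd
      have h3 : (p : ℤ) ^ (padicValInt p x + 1) ∣ (a : ℤ) * k :=
        Dvd.dvd.mul_right ((padicValInt_dvd_iff _ _).2 (Or.inr hxa)) _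
      have h4 : (p : ℤ) ^ (padicValInt p x + 1) ∣ x := by
        simpa using hdd.sub h3
      rcases (padicValInt_dvd_iff _ _).1 h4 with h | h
      · exact hx h
      · omega
    have hne : (a : ℤ) * k + x ≠ 0 := by
      intro h; exact hdvd2 (h ▸ dvd_zero _)
    refine ⟨le_antisymm ?_ ?_, hne⟩
    · by_contra hlt
      exact hdvd2 ((padicValInt_dvd_iff _ _).2 (Or.inr (by omega)))
    · rcases (padicValInt_dvd_iff _ _).1 hdvd1 with h | h
      · exact absurd h hne
      · exact h
  -- the coloring by the unit part of `n` modulo `p ^ (w+1)`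
  let C : ℕ+ → (ZMod (p ^ (w + 1)))ˣ := fun n =>
    ZMod.unitOfCoprime (ordCompl[p] (n : ℕ))
      (Nat.Coprime.pow_right _ (Nat.coprime_ordCompl hp n.ne_zero).symm)
  -- main adjacency argument
  have main : ∀ m n : ℕ+, ((m : ℚ) / (n : ℚ)) ∈ Rset a a b d → m ≠ n → C m ≠ C n := by
    intro m n hmem hmn hC
    obtain ⟨⟨k, hk, hqeq⟩, hqpos, hqne⟩ := hmem
    have hbA : padicValInt p b < padicValInt p (a : ℤ) := lt_of_le_of_lt (le_max_left _ _) hval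
    have hdA : padicValInt p d < padicValInt p (a : ℤ) := lt_of_le_of_lt (le_max_right _ _) hval
    obtain ⟨hA, hAne⟩ := hkey b hb hbA k hk
    obtain ⟨hB, hBne⟩ := hkey d hd hdA k hk
    have hBQ : ((a : ℚ) * k + (d : ℚ)) ≠ 0 := by
      intro h; apply hBne; exact_mod_cast h
    have hnQ : ((n : ℕ) : ℚ) ≠ 0 := Nat.cast_ne_zero.2 n.ne_zero
    rw [div_eq_div_iff hnQ hBQ] at hqeq
    have hZ : ((m : ℕ) : ℤ) * ((a : ℤ) * k + d) = ((a : ℤ) * k + b) * ((n : ℕ) : ℤ) := by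
      exact_mod_cast hqeq
    set M : ℤ := ((m : ℕ) : ℤ) with hM
    set N : ℤ := ((n : ℕ) : ℤ) with hN
    have hMne : M ≠ 0 := Int.natCast_ne_zero.2 m.ne_zero
    have hNne : N ≠ 0 := Int.natCast_ne_zero.2 n.ne_zero
    have hMN : M - N ≠ 0 := by
      simp only [hM, hN, sub_ne_zero]
      exact_mod_cast fun h => hmn (PNat.coe_injective h)
    have hbd' : b - d ≠ 0 := sub_ne_zero.2 hbd
    have eq1 : ((a : ℤ) * k + b) * (M - N) = M * (b - d) := by linear_combination hZ
    have eq2 : ((a : ℤ) * k + d) * (M - N) = N * (b - d) := by linear_combination hZ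
    have v1 : padicValInt p b + padicValInt p (M - N) = padicValInt p M + w := by
      rw [← hA, ← padicValInt.mul hAne hMN, eq1, padicValInt.mul hMne hbd']
    have v2 : padicValInt p b + padicValInt p (M - N) = padicValInt p N + w := by
      rw [heq, ← hB, ← padicValInt.mul hBne hMN, eq2, padicValInt.mul hNne hbd']
    -- equal colors give high divisibility of M - N
    set M' : ℕ := ordCompl[p] (m : ℕ) with hM'
    set N' : ℕ := ordCompl[p] (n : ℕ) with hN'
    have hC' : ((M' : ℕ) : ZMod (p ^ (w + 1))) = ((N' : ℕ) : ZMod (p ^ (w + 1))) := by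
      have := congrArg (Units.val) hC
      simpa [C, ZMod.coe_unitOfCoprime, hM', hN'] using this
    have hmod := (ZMod.natCast_eq_natCast_iff _ _ _).1 hC'
    have hdvd : ((p ^ (w + 1) : ℕ) : ℤ) ∣ (N' : ℤ) - (M' : ℤ) := hmod.dvd
    set t := padicValNat p (m : ℕ) with ht
    have hvm : padicValInt p M = t := padicValInt.of_nat
    have hvn : padicValInt p N = padicValNat p (n : ℕ) := padicValInt.of_nat
    have hM'' : M' = (m : ℕ) / p ^ padicValNat p (m : ℕ) := by
      rw [hM', Nat.factorization_def _ hp]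
    have hN'' : N' = (n : ℕ) / p ^ padicValNat p (n : ℕ) := by
      rw [hN', Nat.factorization_def _ hp]
    have hfacM : (p : ℤ) ^ t * (M' : ℤ) = M := by
      have h0 := Nat.ordProj_mul_ordCompl_eq_self (m : ℕ) p
      rw [Nat.factorization_def _ hp, ← hM'', ← ht] at h0
      rw [hM]
      exact_mod_cast congrArg (Nat.cast : ℕ → ℤ) h0
    have hfacN : (p : ℤ) ^ t * (N' : ℤ) = N := by
      have h0 := Nat.ordProj_mul_ordCompl_eq_self (n : ℕ) p
      rw [Nat.factorization_def _ hp, ← hN''] at h0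
      have htn : padicValNat p (n : ℕ) = t := by omega
      rw [htn] at h0
      rw [hN]
      exact_mod_cast congrArg (Nat.cast : ℕ → ℤ) h0
    have hdiff : N - M = (p : ℤ) ^ t * ((N' : ℤ) - (M' : ℤ)) := by
      rw [mul_sub, hfacM, hfacN]
    have hbig : (p : ℤ) ^ (t + (w + 1)) ∣ N - M := by
      rw [hdiff, pow_add]
      exact mul_dvd_mul_left _ (by exact_mod_cast hdvd)
    have hbig' : (p : ℤ) ^ (t + (w + 1)) ∣ M - N := by
      rw [show M - N = -(N - M) by ring]
      exact dvd_neg.2 hbig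
    have hle : t + (w + 1) ≤ padicValInt p (M - N) :=
      ((padicValInt_dvd_iff _ _).1 hbig').resolve_left hMN
    omega
  -- assemble the coloring
  have hvalid : ∀ {m n : ℕ+}, (graphOf (Rset a a b d)).Adj m n → C m ≠ C n := by
    intro m n hadj
    rcases hadj.2 with h | h
    · exact main m n h hadj.1
    · exact (main n m h hadj.1.symm).symm
  have hcol : (graphOf (Rset a a b d)).Colorable (Fintype.card (ZMod (p ^ (w + 1)))ˣ) :=
    (SimpleGraph.Coloring.mk C hvalid).colorable
  have hcard : Fintype.card (ZMod (p ^ (w + 1)))ˣ = p ^ w * (p - 1) := by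
    rw [ZMod.card_units_eq_totient, Nat.totient_prime_pow hp (Nat.succ_pos w)]
    simp
  rw [← hcard]
  exact hcol.chromaticNumber_le
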